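/- Let P be a symmetric positive-definite d×d real matrix. For every symmetric matrix Ξ there exists a unique symmetric matrix U solving the Lyapunov equation 2Ξ = PU + UP, and the map Ξ ↦ U is linear. Moreover the bilinear form ⟨Ξ₁, Ξ₂⟩_P := Tr(P U_{Ξ₁} U_{Ξ₂}) is a symmetric positive-definite inner product on the space of symmetric matrices. -/

import Mathlib

open Matrix

private lemma trace_tPU_pos {d : ℕ} {P : Matrix (Fin d) (Fin d) ℝ} (hP : P.PosDef)
    {U : Matrix (Fin d) (Fin d) ℝ} (hU : U ≠ 0) : 0 < (Uᵀ * P * U).trace := by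
  have hcol : ∀ j, (Uᵀ * P * U) j j = (fun i => U i j) ⬝ᵥ P *ᵥ (fun i => U i j) := by
    intro j
    simp only [Matrix.mul_assoc, Matrix.mul_apply, Matrix.mulVec, dotProduct,
      Matrix.transpose_apply, Finset.sum_mul, Finset.mul_sum]
    rw [Finset.sum_comm]
    exact Finset.sum_congr rfl fun x _ => Finset.sum_congr rfl fun y _ => by ring
  rw [Matrix.trace]
  apply Finset.sum_pos'
  · intro j _
    rw [Matrix.diag_apply, hcol j]
    simpa using hP.posSemidef.dotProduct_mulVec_nonneg (fun i => U i j)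
  · obtain ⟨i, j, hij⟩ : ∃ i j, U i j ≠ 0 := by
      by_contra h; push_neg at h; exact hU (by ext i j; simpa using h i j)
    refine ⟨j, Finset.mem_univ j, ?_⟩
    rw [Matrix.diag_apply, hcol j]
    simpa using hP.dotProduct_mulVec_pos (x := fun i => U i j) (fun h => hij (congrFun h i))

theorem lyapunov_bures_metric {d : ℕ} (P : Matrix (Fin d) (Fin d) ℝ)
    (hP : P.PosDef) :
    (∀ Ξ : Matrix (Fin d) (Fin d) ℝ, Ξ.IsSymm →
      ∃! U : Matrix (Fin d) (Fin d) ℝ, U.IsSymm ∧ P * U + U * P = (2 : ℝ) • Ξ) ∧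
    ∃ L : Matrix (Fin d) (Fin d) ℝ →ₗ[ℝ] Matrix (Fin d) (Fin d) ℝ,
      (∀ Ξ : Matrix (Fin d) (Fin d) ℝ, Ξ.IsSymm →
        (L Ξ).IsSymm ∧ P * L Ξ + L Ξ * P = (2 : ℝ) • Ξ) ∧
      (∀ Ξ₁ Ξ₂ : Matrix (Fin d) (Fin d) ℝ, Ξ₁.IsSymm → Ξ₂.IsSymm →
        (P * L Ξ₁ * L Ξ₂).trace = (P * L Ξ₂ * L Ξ₁).trace) ∧
      (∀ Ξ : Matrix (Fin d) (Fin d) ℝ, Ξ.IsSymm → Ξ ≠ 0 →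
        0 < (P * L Ξ * L Ξ).trace) := by
  have hPs : Pᵀ = P := hP.isHermitian.eq
  set T : Matrix (Fin d) (Fin d) ℝ →ₗ[ℝ] Matrix (Fin d) (Fin d) ℝ :=
    LinearMap.mulLeft ℝ P + LinearMap.mulRight ℝ P with hT
  have hTapp : ∀ U, T U = P * U + U * P := fun U => rfl
  -- injectivity of the Lyapunov operator
  have hker : ∀ U, T U = 0 → U = 0 := by
    intro U h0
    by_contra hne
    have h1 : 0 < (Uᵀ * P * U).trace := trace_tPU_pos hP hne
    have hUt : Uᵀ ≠ 0 := fun h => hne (by simpa using congrArg Matrix.transpose h)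
    have h2 : 0 < (U * P * Uᵀ).trace := by
      simpa using trace_tPU_pos hP hUt
    have h5 : (Uᵀ * U * P).trace = (U * P * Uᵀ).trace := by
      rw [Matrix.trace_mul_cycle U P Uᵀ]
    have h3 : (Uᵀ * P * U).trace + (U * P * Uᵀ).trace = 0 := by
      have h4 := congrArg (fun M => (Uᵀ * M).trace) ((hTapp U).symm.trans h0)
      simp only [Matrix.mul_add, Matrix.trace_add, Matrix.mul_zero,
        Matrix.trace_zero, ← Matrix.mul_assoc] at h4
      rw [← h5]
      exact h4
    linarith
  have hinj : Function.Injective T := by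
    rw [← LinearMap.ker_eq_bot, LinearMap.ker_eq_bot']
    exact hker
  have hsurj : Function.Surjective T := (LinearMap.injective_iff_surjective).mp hinj
  let e := LinearEquiv.ofBijective T ⟨hinj, hsurj⟩
  let L : Matrix (Fin d) (Fin d) ℝ →ₗ[ℝ] Matrix (Fin d) (Fin d) ℝ :=
    (2 : ℝ) • (e.symm : Matrix (Fin d) (Fin d) ℝ →ₗ[ℝ] Matrix (Fin d) (Fin d) ℝ)
  have hsol : ∀ Ξ, P * L Ξ + L Ξ * P = (2 : ℝ) • Ξ := by
    intro Ξ
    have h1 : T (L Ξ) = (2 : ℝ) • Ξ := by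
      have : L Ξ = (2 : ℝ) • e.symm Ξ := rfl
      rw [this, T.map_smul]
      congr 1
      exact e.apply_symm_apply Ξ
    rw [← hTapp]; exact h1
  have hsymm : ∀ Ξ : Matrix (Fin d) (Fin d) ℝ, Ξ.IsSymm → (L Ξ).IsSymm := by
    intro Ξ hΞ
    have h1 : T (L Ξ)ᵀ = T (L Ξ) := by
      rw [hTapp, hTapp]
      have : P * (L Ξ)ᵀ + (L Ξ)ᵀ * P = (P * L Ξ + L Ξ * P)ᵀ := by
        rw [Matrix.transpose_add, Matrix.transpose_mul, Matrix.transpose_mul, hPs, add_comm]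
      rw [this, hsol Ξ, Matrix.transpose_smul, hΞ, ← hsol Ξ]
    exact hinj h1
  refine ⟨?_, L, fun Ξ hΞ => ⟨hsymm Ξ hΞ, hsol Ξ⟩, ?_, ?_⟩
  · intro Ξ hΞ
    refine ⟨L Ξ, ⟨hsymm Ξ hΞ, hsol Ξ⟩, ?_⟩
    rintro V ⟨-, hV⟩
    exact hinj (by rw [hTapp, hTapp, hV, hsol])
  · intro Ξ₁ Ξ₂ h1 h2
    have s1 : (L Ξ₁)ᵀ = L Ξ₁ := hsymm Ξ₁ h1
    have s2 : (L Ξ₂)ᵀ = L Ξ₂ := hsymm Ξ₂ h2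
    calc (P * L Ξ₁ * L Ξ₂).trace = ((P * L Ξ₁ * L Ξ₂)ᵀ).trace := (Matrix.trace_transpose _).symm
      _ = (L Ξ₂ * L Ξ₁ * P).trace := by
          rw [Matrix.transpose_mul, Matrix.transpose_mul, s1, s2, hPs, Matrix.mul_assoc]
      _ = (P * L Ξ₂ * L Ξ₁).trace := by
          rw [Matrix.trace_mul_cycle]
  · intro Ξ hΞ hne
    have hU : L Ξ ≠ 0 := by
      intro h0
      apply hne
      have h2 : (2 : ℝ) • Ξ = 0 := by rw [← hsol Ξ, h0]; simp
      simpa [two_ne_zero] using (smul_eq_zero.mp h2)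
    have hsym : (L Ξ)ᵀ = L Ξ := hsymm Ξ hΞ
    have h1 : (P * L Ξ * L Ξ).trace = ((L Ξ)ᵀ * P * L Ξ).trace := by
      rw [hsym, Matrix.trace_mul_cycle]
    rw [h1]
    exact trace_tPU_pos hP hU
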